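/- Let M = [[a, b], [c, d]] be real with det M = δ = ±1. The image under M of the line (0, 1, n, 0) (a non-horizontal line through the origin) is the cycle (2cd, ad + bc, δn, 2ab), which passes through the real points a/c and b/d. -/

import Mathlib

/-- Let `M = [[a, b], [c, d]]` be real with `δ = det M = ±1`, `c ≠ 0`,
`d ≠ 0`. The Möbius image under `M` of the line `(0, 1, n, 0)` (a non-horizontal line
through the origin, with equation `-2u - 2nv = 0`) is the cycle
`(2cd, ad + bc, δ n, 2ab)`: every image point satisfies its equation, and it passes
through the real points `a/c` and `b/d`. -/
theorem mobius_image_of_line_through_origin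
    (a b c d n : ℝ) (δ : ℝ) (hδ : δ = a * d - b * c)
    (hδ1 : δ = 1 ∨ δ = -1) (hc : c ≠ 0) (hd : d ≠ 0) :
    (∀ z : ℂ, -2 * z.re - 2 * n * z.im = 0 → (c : ℂ) * z + (d : ℂ) ≠ 0 →
      (2 * c * d) * ((((a : ℂ) * z + b) / ((c : ℂ) * z + d)).re ^ 2 +
          (((a : ℂ) * z + b) / ((c : ℂ) * z + d)).im ^ 2)
        - 2 * (a * d + b * c) * (((a : ℂ) * z + b) / ((c : ℂ) * z + d)).re
        - 2 * (δ * n) * (((a : ℂ) * z + b) / ((c : ℂ) * z + d)).im + 2 * a * b = 0) ∧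
    ((2 * c * d) * (a / c) ^ 2 - 2 * (a * d + b * c) * (a / c) + 2 * a * b = 0) ∧
    ((2 * c * d) * (b / d) ^ 2 - 2 * (a * d + b * c) * (b / d) + 2 * a * b = 0) := by
  refine ⟨?_, by field_simp; ring, by field_simp; ring⟩
  intro z hz hden
  have hx : z.re = -(n * z.im) := by linarith
  have hD : (c * z.re + d) ^ 2 + (c * z.im) ^ 2 ≠ 0 := by
    intro h
    apply hden
    have h1 : c * z.re + d = 0 := by nlinarith [sq_nonneg (c * z.re + d), sq_nonneg (c * z.im)]
    have h2 : c * z.im = 0 := by nlinarith [sq_nonneg (c * z.re + d), sq_nonneg (c * z.im)]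
    apply Complex.ext <;> simp [h1, h2]
  have hre : (((a : ℂ) * z + b) / ((c : ℂ) * z + d)).re =
      ((a * z.re + b) * (c * z.re + d) + (a * z.im) * (c * z.im)) /
        ((c * z.re + d) ^ 2 + (c * z.im) ^ 2) := by
    rw [Complex.div_re]
    simp [Complex.normSq_apply, Complex.add_re, Complex.add_im, Complex.mul_re, Complex.mul_im]
    ring_nf
  have him : (((a : ℂ) * z + b) / ((c : ℂ) * z + d)).im =
      ((a * z.im) * (c * z.re + d) - (a * z.re + b) * (c * z.im)) /
        ((c * z.re + d) ^ 2 + (c * z.im) ^ 2) := by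
    rw [Complex.div_im]
    simp [Complex.normSq_apply, Complex.add_re, Complex.add_im, Complex.mul_re, Complex.mul_im]
    ring_nf
  rw [hre, him, hδ]
  generalize hDdef : (c * z.re + d) ^ 2 + (c * z.im) ^ 2 = D at hD ⊢
  have key : 2 * c * d * (((a * z.re + b) * (c * z.re + d) + a * z.im * (c * z.im)) ^ 2 +
        (a * z.im * (c * z.re + d) - (a * z.re + b) * (c * z.im)) ^ 2)
      - 2 * (a * d + b * c) * (((a * z.re + b) * (c * z.re + d) + a * z.im * (c * z.im)) * D)
      - 2 * ((a * d - b * c) * n) * ((a * z.im * (c * z.re + d) - (a * z.re + b) * (c * z.im)) * D)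
      + 2 * a * b * (D * D) = 0 := by
    subst hDdef
    rw [hx]
    ring
  field_simp
  linear_combination key
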